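/- Under the assumptions max_i ‖x_i‖^2 ≤ 1 and n ≥ 3, with |T| = n·binom(n−1,2), one has (1/|T|)·‖Σ_{t∈T} M_t^2‖ ≤ 70·‖X X^T‖/n, where M_t = X L_t X^T. -/

import Mathlib

open Matrix
open scoped Matrix.Norms.L2Operator

/-- `L_t = e_i e_kᵀ + e_k e_iᵀ − e_i e_jᵀ − e_j e_iᵀ + e_j e_jᵀ − e_k e_kᵀ`. -/
def Lt {n : ℕ} (i j k : Fin n) : Matrix (Fin n) (Fin n) ℝ :=
  vecMulVec (Pi.single i 1) (Pi.single k 1) + vecMulVec (Pi.single k 1) (Pi.single i 1)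
    - vecMulVec (Pi.single i 1) (Pi.single j 1) - vecMulVec (Pi.single j 1) (Pi.single i 1)
    + vecMulVec (Pi.single j 1) (Pi.single j 1) - vecMulVec (Pi.single k 1) (Pi.single k 1)

/-- `M_t = X L_t Xᵀ`. -/
def Mt {p n : ℕ} (X : Matrix (Fin p) (Fin n) ℝ) (i j k : Fin n) : Matrix (Fin p) (Fin p) ℝ :=
  X * Lt i j k * Xᵀ

lemma opNorm_le_of_sq {m n : ℕ} (B : Matrix (Fin m) (Fin n) ℝ) {c : ℝ} (hc : 0 ≤ c)
    (h : ∀ x : Fin n → ℝ, ∑ a, (B.mulVec x a)^2 ≤ c^2 * ∑ i, (x i)^2) : ‖B‖ ≤ c := by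
  rw [Matrix.l2_opNorm_def]
  refine ContinuousLinearMap.opNorm_le_bound _ hc (fun x => ?_)
  have hx : ∀ (k : ℕ) (y : EuclideanSpace ℝ (Fin k)), ‖y‖ = Real.sqrt (∑ a, (y a)^2) := by
    intro k y
    rw [EuclideanSpace.norm_eq]
    congr 1
    refine Finset.sum_congr rfl (fun a _ => ?_)
    rw [Real.norm_eq_abs, sq_abs]
  have h1 : ((Matrix.toEuclideanLin.trans LinearMap.toContinuousLinearMap) B) x
      = (WithLp.equiv 2 (Fin m → ℝ)).symm (B *ᵥ (WithLp.equiv 2 (Fin n → ℝ)) x) := rfl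
  rw [h1, hx, hx]
  have h2 : Real.sqrt (∑ a, (((WithLp.equiv 2 (Fin m → ℝ)).symm (B *ᵥ (WithLp.equiv 2 (Fin n → ℝ)) x) : EuclideanSpace ℝ (Fin m)) a)^2)
      = Real.sqrt (∑ a, ((B *ᵥ (fun i => x i)) a)^2) := rfl
  rw [h2]
  calc Real.sqrt (∑ a, ((B *ᵥ (fun i => x i)) a)^2)
      ≤ Real.sqrt (c^2 * ∑ i, ((x : Fin n → ℝ) i)^2) := Real.sqrt_le_sqrt (h _)
    _ = c * Real.sqrt (∑ i, ((x : Fin n → ℝ) i)^2) := by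
        rw [Real.sqrt_mul (by positivity), Real.sqrt_sq hc]

lemma opNorm_diagonal_le {n : ℕ} (d : Fin n → ℝ) {c : ℝ} (hc : 0 ≤ c)
    (h : ∀ a, |d a| ≤ c) : ‖Matrix.diagonal d‖ ≤ c := by
  refine opNorm_le_of_sq _ hc (fun x => ?_)
  have : ∀ a, (Matrix.diagonal d).mulVec x a = d a * x a := by
    intro a
    simp [Matrix.mulVec, dotProduct, Matrix.diagonal_apply, Finset.sum_ite_eq,
      ite_mul]
  rw [Finset.mul_sum]
  refine Finset.sum_le_sum (fun a _ => ?_)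
  rw [this a, mul_pow]
  have h2 : (d a)^2 ≤ c^2 := by
    have := h a
    nlinarith [abs_nonneg (d a), neg_abs_le (d a), le_abs_self (d a)]
  nlinarith [sq_nonneg (x a)]

lemma opNorm_le_card_mul {n : ℕ} (B : Matrix (Fin n) (Fin n) ℝ) {c : ℝ} (hc : 0 ≤ c)
    (h : ∀ a b, |B a b| ≤ c) : ‖B‖ ≤ n * c := by
  refine opNorm_le_of_sq _ (by positivity) (fun x => ?_)
  have key : ∀ a, (B.mulVec x a)^2 ≤ (∑ b, (B a b)^2) * ∑ b, (x b)^2 := by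
    intro a
    have hrw : B.mulVec x a = ∑ b, B a b * x b := rfl
    rw [hrw]
    exact Finset.sum_mul_sq_le_sq_mul_sq Finset.univ (fun b => B a b) (fun b => x b)
  calc ∑ a, (B.mulVec x a)^2 ≤ ∑ a : Fin n, ((∑ b, (B a b)^2) * ∑ b, (x b)^2) :=
        Finset.sum_le_sum (fun a _ => key a)
    _ ≤ ∑ a : Fin n, ((n * c^2) * ∑ b, (x b)^2) := by
        refine Finset.sum_le_sum (fun a _ => ?_)
        have h1 : (∑ b, (B a b)^2) ≤ n * c^2 := by
          calc (∑ b, (B a b)^2) ≤ ∑ b : Fin n, c^2 := by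
                refine Finset.sum_le_sum (fun b _ => ?_)
                nlinarith [h a b, abs_nonneg (B a b), neg_abs_le (B a b), le_abs_self (B a b)]
            _ = n * c^2 := by simp [Finset.sum_const, mul_comm]
        have h2 : (0:ℝ) ≤ ∑ b, (x b)^2 := by positivity
        exact mul_le_mul_of_nonneg_right h1 h2
    _ = (n*c)^2 * ∑ i, (x i)^2 := by
        rw [Finset.sum_const, Finset.card_univ, Fintype.card_fin]
        ring

lemma Lt_apply {n : ℕ} (i j k a c : Fin n) :
    Lt i j k a c = (if a = i then 1 else 0) * (if c = k then 1 else 0)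
      + (if a = k then 1 else 0) * (if c = i then 1 else 0)
      - (if a = i then 1 else 0) * (if c = j then 1 else 0)
      - (if a = j then 1 else 0) * (if c = i then 1 else 0)
      + (if a = j then 1 else 0) * (if c = j then 1 else 0)
      - (if a = k then 1 else 0) * (if c = k then 1 else 0) := by
  simp [Lt, vecMulVec_apply, Pi.single_apply]

lemma Lt_symm_apply {n : ℕ} (i j k a c : Fin n) : Lt i j k a c = Lt i j k c a := by
  rw [Lt_apply, Lt_apply]; ring

lemma Lt_swap {n : ℕ} (i j k : Fin n) : Lt i k j = - Lt i j k := by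
  ext a c
  rw [Matrix.neg_apply, Lt_apply, Lt_apply]; ring

lemma Lt_row_i {n : ℕ} {i j k : Fin n} (hij : i ≠ j) (hik : i ≠ k) :
    Lt i j k i = Pi.single k 1 - Pi.single j 1 := by
  funext c
  rw [Lt_apply]
  simp [Pi.single_apply, hij, hik, (by tauto : ¬ (i = j)), (by tauto : ¬ (i = k))]

lemma Lt_row_j {n : ℕ} {i j k : Fin n} (hij : i ≠ j) (hjk : j ≠ k) :
    Lt i j k j = Pi.single j 1 - Pi.single i 1 := by
  funext c
  rw [Lt_apply]
  simp [Pi.single_apply, Ne.symm hij, hjk]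
  ring

lemma Lt_row_k {n : ℕ} {i j k : Fin n} (hik : i ≠ k) (hjk : j ≠ k) :
    Lt i j k k = Pi.single i 1 - Pi.single k 1 := by
  funext c
  rw [Lt_apply]
  simp [Pi.single_apply, Ne.symm hik, Ne.symm hjk]

lemma Lt_row_other {n : ℕ} {i j k a : Fin n} (hai : a ≠ i) (haj : a ≠ j) (hak : a ≠ k) :
    Lt i j k a = 0 := by
  funext c
  rw [Lt_apply]
  simp [hai, haj, hak]

lemma LAL_apply {n : ℕ} (A : Matrix (Fin n) (Fin n) ℝ) (i j k a b : Fin n) :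
    (Lt i j k * A * Lt i j k) a b = Lt i j k a ⬝ᵥ (A *ᵥ Lt i j k b) := by
  rw [Matrix.mul_assoc, Matrix.mul_apply]
  simp only [Matrix.mulVec, dotProduct, Matrix.mul_apply, Finset.mul_sum]
  refine Finset.sum_congr rfl (fun c _ => ?_)
  refine Finset.sum_congr rfl (fun d _ => ?_)
  rw [Lt_symm_apply i j k d b]

lemma quad_abs {n : ℕ} (A : Matrix (Fin n) (Fin n) ℝ) (hA : ∀ c d, |A c d| ≤ 1)
    (x y z w : Fin n) :
    |(Pi.single x 1 - Pi.single y 1 : Fin n → ℝ) ⬝ᵥ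
      (A *ᵥ (Pi.single z 1 - Pi.single w 1 : Fin n → ℝ))| ≤ 4 := by
  have hval : (Pi.single x 1 - Pi.single y 1 : Fin n → ℝ) ⬝ᵥ
      (A *ᵥ (Pi.single z 1 - Pi.single w 1 : Fin n → ℝ))
      = A x z - A x w - A y z + A y w := by
    rw [Matrix.mulVec_sub, sub_dotProduct]
    simp [dotProduct_sub, Matrix.mulVec_single, single_dotProduct]
    ring
  rw [hval, abs_le]
  have h1 := abs_le.1 (hA x z); have h2 := abs_le.1 (hA x w)
  have h3 := abs_le.1 (hA y z); have h4 := abs_le.1 (hA y w)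
  constructor <;> linarith [h1.1, h1.2, h2.1, h2.2, h3.1, h3.2, h4.1, h4.2]

lemma entry_bound {n : ℕ} (A : Matrix (Fin n) (Fin n) ℝ) (hA : ∀ c d, |A c d| ≤ 1)
    {i j k : Fin n} (hij : i ≠ j) (hik : i ≠ k) (hjk : j ≠ k) (a b : Fin n) :
    |(Lt i j k * A * Lt i j k) a b| ≤
      if (a = i ∨ a = j ∨ a = k) ∧ (b = i ∨ b = j ∨ b = k) then 4 else 0 := by
  rw [LAL_apply]
  have hrow : ∀ c : Fin n, (c = i ∨ c = j ∨ c = k) →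
      ∃ x y : Fin n, Lt i j k c = Pi.single x 1 - Pi.single y 1 := by
    rintro c (hc | hc | hc) <;> rw [hc]
    · exact ⟨k, j, Lt_row_i hij hik⟩
    · exact ⟨j, i, Lt_row_j hij hjk⟩
    · exact ⟨i, k, Lt_row_k hik hjk⟩
  by_cases ha : a = i ∨ a = j ∨ a = k
  · by_cases hb : b = i ∨ b = j ∨ b = k
    · rw [if_pos ⟨ha, hb⟩]
      obtain ⟨x, y, hxy⟩ := hrow a ha
      obtain ⟨z, w, hzw⟩ := hrow b hb
      rw [hxy, hzw]
      exact quad_abs A hA x y z w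
    · rw [if_neg (by tauto)]
      push_neg at hb
      rw [Lt_row_other hb.1 hb.2.1 hb.2.2]
      simp
  · rw [if_neg (by tauto)]
    push_neg at ha
    rw [Lt_row_other ha.1 ha.2.1 ha.2.2]
    simp

lemma count_ne_one {n : ℕ} (u : Fin n) (c : ℝ) :
    ∑ x : Fin n, (if x ≠ u then c else 0) = c * ((n:ℝ) - 1) := by
  rw [← Finset.sum_filter, Finset.sum_const]
  have h : Finset.univ.filter (fun x : Fin n => x ≠ u) = Finset.univ.erase u := by
    ext x; simp
  rw [h, Finset.card_erase_of_mem (Finset.mem_univ u), nsmul_eq_mul, Finset.card_univ,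
    Fintype.card_fin]
  have h1 : 1 ≤ n := Fin.pos u
  push_cast [Nat.cast_sub h1]
  ring

lemma count_ne_two {n : ℕ} {u v : Fin n} (huv : u ≠ v) (c : ℝ) :
    ∑ x : Fin n, (if x ≠ u ∧ x ≠ v then c else 0) = c * ((n:ℝ) - 2) := by
  rw [← Finset.sum_filter, Finset.sum_const]
  have h : Finset.univ.filter (fun x : Fin n => x ≠ u ∧ x ≠ v) =
      (Finset.univ.erase u).erase v := by
    ext x; simp; tauto
  rw [h, Finset.card_erase_of_mem, Finset.card_erase_of_mem (Finset.mem_univ u)]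
  · rw [nsmul_eq_mul, Finset.card_univ, Fintype.card_fin]
    have h2 : 2 ≤ n := by
      have hnt : Nontrivial (Fin n) := ⟨⟨u, v, huv⟩⟩
      have := Fintype.one_lt_card (α := Fin n)
      simp at this; omega
    have h3 : n - 1 - 1 = n - 2 := by omega
    rw [h3]
    push_cast [Nat.cast_sub h2]
    ring
  · exact Finset.mem_erase.2 ⟨Ne.symm huv, Finset.mem_univ v⟩

lemma count_core {n : ℕ} (a : Fin n) :
    ∑ j : Fin n, ∑ k : Fin n, (if j ≠ k ∧ j ≠ a ∧ k ≠ a then (4:ℝ) else 0)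
      = 4 * ((n:ℝ) - 1) * ((n:ℝ) - 2) := by
  have hin : ∀ j : Fin n, (∑ k : Fin n, if j ≠ k ∧ j ≠ a ∧ k ≠ a then (4:ℝ) else 0)
      = if j ≠ a then 4 * ((n:ℝ) - 2) else 0 := by
    intro j
    by_cases hj : j = a
    · subst hj; simp
    · rw [if_pos hj]
      have hcong : ∀ k : Fin n, (if j ≠ k ∧ j ≠ a ∧ k ≠ a then (4:ℝ) else 0)
          = (if k ≠ j ∧ k ≠ a then (4:ℝ) else 0) := by
        intro k
        refine if_congr ?_ rfl rfl
        constructor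
        · rintro ⟨h1, _, h3⟩; exact ⟨Ne.symm h1, h3⟩
        · rintro ⟨h1, h2⟩; exact ⟨Ne.symm h1, hj, h2⟩
      rw [Finset.sum_congr rfl (fun k _ => hcong k)]
      exact count_ne_two hj 4
  rw [Finset.sum_congr rfl (fun j _ => hin j), count_ne_one a]
  ring

lemma sum_ite_eq_one {n : ℕ} (a : Fin n) : ∑ x : Fin n, (if x = a then (1:ℝ) else 0) = 1 := by
  simp [Finset.sum_ite_eq']

lemma collapse_in {n : ℕ} (Q : Prop) [Decidable Q] (f : Fin n → ℝ) :
    ∑ k : Fin n, (if Q then f k else 0) = if Q then ∑ k, f k else 0 := by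
  by_cases hq : Q <;> simp [hq]

lemma sum3_split2a {n : ℕ} (P : Fin n → Prop) [DecidablePred P]
    (W : Fin n → Fin n → Prop) [∀ x, DecidablePred (W x)] (c : ℝ) :
    ∑ i : Fin n, ∑ j : Fin n, ∑ k : Fin n, (if P i ∧ W j k then c else 0)
      = (∑ i : Fin n, if P i then (1:ℝ) else 0) *
        (∑ j : Fin n, ∑ k : Fin n, if W j k then c else 0) := by
  rw [Finset.sum_mul]
  refine Finset.sum_congr rfl (fun i _ => ?_)
  by_cases hp : P i <;> simp [hp]

lemma sum3_split2b {n : ℕ} (Q : Fin n → Prop) [DecidablePred Q]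
    (W : Fin n → Fin n → Prop) [∀ x, DecidablePred (W x)] (c : ℝ) :
    ∑ i : Fin n, ∑ j : Fin n, ∑ k : Fin n, (if Q j ∧ W i k then c else 0)
      = (∑ j : Fin n, if Q j then (1:ℝ) else 0) *
        (∑ i : Fin n, ∑ k : Fin n, if W i k then c else 0) := by
  rw [Finset.mul_sum]
  refine Finset.sum_congr rfl (fun i _ => ?_)
  rw [Finset.sum_mul]
  refine Finset.sum_congr rfl (fun j _ => ?_)
  by_cases hq : Q j <;> simp [hq]

lemma sum3_split2c {n : ℕ} (R : Fin n → Prop) [DecidablePred R]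
    (W : Fin n → Fin n → Prop) [∀ x, DecidablePred (W x)] (c : ℝ) :
    ∑ i : Fin n, ∑ j : Fin n, ∑ k : Fin n, (if R k ∧ W i j then c else 0)
      = (∑ k : Fin n, if R k then (1:ℝ) else 0) *
        (∑ i : Fin n, ∑ j : Fin n, if W i j then c else 0) := by
  rw [Finset.mul_sum]
  refine Finset.sum_congr rfl (fun i _ => ?_)
  rw [Finset.mul_sum]
  refine Finset.sum_congr rfl (fun j _ => ?_)
  rw [Finset.sum_mul]
  refine Finset.sum_congr rfl (fun k _ => ?_)
  by_cases hr : R k <;> simp [hr]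

lemma sum3_split3 {n : ℕ} (P Q R : Fin n → Prop)
    [DecidablePred P] [DecidablePred Q] [DecidablePred R] (c : ℝ) :
    ∑ i : Fin n, ∑ j : Fin n, ∑ k : Fin n, (if P i ∧ Q j ∧ R k then c else 0)
      = (∑ i : Fin n, if P i then (1:ℝ) else 0) *
        (∑ j : Fin n, if Q j then (1:ℝ) else 0) *
        (∑ k : Fin n, if R k then c else 0) := by
  rw [mul_assoc, Finset.sum_mul]
  refine Finset.sum_congr rfl (fun i _ => ?_)
  by_cases hp : P i
  · simp only [hp, true_and, if_true, one_mul]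
    rw [Finset.sum_mul]
    refine Finset.sum_congr rfl (fun j _ => ?_)
    by_cases hq : Q j <;> simp [hq]
  · simp [hp]

lemma ite4_nonneg (P : Prop) [Decidable P] : (0:ℝ) ≤ if P then 4 else 0 := by
  split <;> norm_num

lemma sumD_diag {n : ℕ} (A : Matrix (Fin n) (Fin n) ℝ) (hA : ∀ c d, |A c d| ≤ 1) (a : Fin n) :
    ∑ i : Fin n, ∑ j : Fin n, ∑ k : Fin n,
        (if i ≠ j ∧ i ≠ k ∧ j ≠ k then |(Lt i j k * A * Lt i j k) a a| else 0)
      ≤ 12 * ((n:ℝ) - 1) * ((n:ℝ) - 2) := by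
  have hptwise : ∀ i j k : Fin n,
      (if i ≠ j ∧ i ≠ k ∧ j ≠ k then |(Lt i j k * A * Lt i j k) a a| else 0)
        ≤ (if i = a ∧ (j ≠ k ∧ j ≠ a ∧ k ≠ a) then (4:ℝ) else 0)
          + (if j = a ∧ (i ≠ k ∧ i ≠ a ∧ k ≠ a) then (4:ℝ) else 0)
          + (if k = a ∧ (i ≠ j ∧ i ≠ a ∧ j ≠ a) then (4:ℝ) else 0) := by
    intro i j k
    have hn1 := ite4_nonneg (i = a ∧ (j ≠ k ∧ j ≠ a ∧ k ≠ a))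
    have hn2 := ite4_nonneg (j = a ∧ (i ≠ k ∧ i ≠ a ∧ k ≠ a))
    have hn3 := ite4_nonneg (k = a ∧ (i ≠ j ∧ i ≠ a ∧ j ≠ a))
    by_cases hd : i ≠ j ∧ i ≠ k ∧ j ≠ k
    · rw [if_pos hd]
      obtain ⟨hij, hik, hjk⟩ := hd
      have hb := entry_bound A hA hij hik hjk a a
      by_cases hm : a = i ∨ a = j ∨ a = k
      · rw [if_pos ⟨hm, hm⟩] at hb
        rcases hm with hm | hm | hm
        · have ht : (if i = a ∧ (j ≠ k ∧ j ≠ a ∧ k ≠ a) then (4:ℝ) else 0) = 4 :=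
            if_pos ⟨hm.symm, hjk, by rw [hm]; exact Ne.symm hij, by rw [hm]; exact Ne.symm hik⟩
          rw [ht]; linarith
        · have ht : (if j = a ∧ (i ≠ k ∧ i ≠ a ∧ k ≠ a) then (4:ℝ) else 0) = 4 :=
            if_pos ⟨hm.symm, hik, by rw [hm]; exact hij, by rw [hm]; exact Ne.symm hjk⟩
          rw [ht]; linarith
        · have ht : (if k = a ∧ (i ≠ j ∧ i ≠ a ∧ j ≠ a) then (4:ℝ) else 0) = 4 :=
            if_pos ⟨hm.symm, hij, by rw [hm]; exact hik, by rw [hm]; exact hjk⟩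
          rw [ht]; linarith
      · rw [if_neg (fun hc => hm hc.1)] at hb
        linarith [abs_nonneg ((Lt i j k * A * Lt i j k) a a), hb]
    · rw [if_neg hd]
      linarith
  calc ∑ i : Fin n, ∑ j : Fin n, ∑ k : Fin n,
        (if i ≠ j ∧ i ≠ k ∧ j ≠ k then |(Lt i j k * A * Lt i j k) a a| else 0)
      ≤ ∑ i : Fin n, ∑ j : Fin n, ∑ k : Fin n,
          ((if i = a ∧ (j ≠ k ∧ j ≠ a ∧ k ≠ a) then (4:ℝ) else 0)
            + (if j = a ∧ (i ≠ k ∧ i ≠ a ∧ k ≠ a) then (4:ℝ) else 0)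
            + (if k = a ∧ (i ≠ j ∧ i ≠ a ∧ j ≠ a) then (4:ℝ) else 0)) := by
        refine Finset.sum_le_sum (fun i _ => Finset.sum_le_sum (fun j _ =>
          Finset.sum_le_sum (fun k _ => hptwise i j k)))
    _ = 12 * ((n:ℝ) - 1) * ((n:ℝ) - 2) := by
        simp only [Finset.sum_add_distrib]
        rw [sum3_split2a (fun i => i = a) (fun j k => j ≠ k ∧ j ≠ a ∧ k ≠ a) 4,
          sum3_split2b (fun j => j = a) (fun i k => i ≠ k ∧ i ≠ a ∧ k ≠ a) 4,
          sum3_split2c (fun k => k = a) (fun i j => i ≠ j ∧ i ≠ a ∧ j ≠ a) 4,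
          sum_ite_eq_one a, count_core a]
        ring

lemma sum_ite_eq_c {n : ℕ} (a : Fin n) (c : ℝ) :
    ∑ x : Fin n, (if x = a then c else 0) = c := by
  simp [Finset.sum_ite_eq']

lemma sumD_off {n : ℕ} (A : Matrix (Fin n) (Fin n) ℝ) (hA : ∀ c d, |A c d| ≤ 1)
    {a b : Fin n} (hab : a ≠ b) :
    ∑ i : Fin n, ∑ j : Fin n, ∑ k : Fin n,
        (if i ≠ j ∧ i ≠ k ∧ j ≠ k then |(Lt i j k * A * Lt i j k) a b| else 0)
      ≤ 24 * ((n:ℝ) - 2) := by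
  have hptwise : ∀ i j k : Fin n,
      (if i ≠ j ∧ i ≠ k ∧ j ≠ k then |(Lt i j k * A * Lt i j k) a b| else 0)
        ≤ (if i = a ∧ j = b ∧ (k ≠ a ∧ k ≠ b) then (4:ℝ) else 0)
          + (if i = a ∧ (j ≠ a ∧ j ≠ b) ∧ k = b then (4:ℝ) else 0)
          + (if i = b ∧ j = a ∧ (k ≠ a ∧ k ≠ b) then (4:ℝ) else 0)
          + (if i = b ∧ (j ≠ a ∧ j ≠ b) ∧ k = a then (4:ℝ) else 0)
          + (if (i ≠ a ∧ i ≠ b) ∧ j = a ∧ k = b then (4:ℝ) else 0)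
          + (if (i ≠ a ∧ i ≠ b) ∧ j = b ∧ k = a then (4:ℝ) else 0) := by
    intro i j k
    have hn1 := ite4_nonneg (i = a ∧ j = b ∧ (k ≠ a ∧ k ≠ b))
    have hn2 := ite4_nonneg (i = a ∧ (j ≠ a ∧ j ≠ b) ∧ k = b)
    have hn3 := ite4_nonneg (i = b ∧ j = a ∧ (k ≠ a ∧ k ≠ b))
    have hn4 := ite4_nonneg (i = b ∧ (j ≠ a ∧ j ≠ b) ∧ k = a)
    have hn5 := ite4_nonneg ((i ≠ a ∧ i ≠ b) ∧ j = a ∧ k = b)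
    have hn6 := ite4_nonneg ((i ≠ a ∧ i ≠ b) ∧ j = b ∧ k = a)
    by_cases hd : i ≠ j ∧ i ≠ k ∧ j ≠ k
    · rw [if_pos hd]
      obtain ⟨hij, hik, hjk⟩ := hd
      have hb := entry_bound A hA hij hik hjk a b
      by_cases hma : a = i ∨ a = j ∨ a = k
      · by_cases hmb : b = i ∨ b = j ∨ b = k
        · rw [if_pos ⟨hma, hmb⟩] at hb
          rcases hma with hma | hma | hma <;> rcases hmb with hmb | hmb | hmb
          · exact absurd (hma.trans hmb.symm) hab
          · have ht : (if i = a ∧ j = b ∧ (k ≠ a ∧ k ≠ b) then (4:ℝ) else 0) = 4 :=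
              if_pos ⟨hma.symm, hmb.symm,
                by rw [hma]; exact Ne.symm hik, by rw [hmb]; exact Ne.symm hjk⟩
            rw [ht]; linarith
          · have ht : (if i = a ∧ (j ≠ a ∧ j ≠ b) ∧ k = b then (4:ℝ) else 0) = 4 :=
              if_pos ⟨hma.symm, ⟨by rw [hma]; exact Ne.symm hij, by rw [hmb]; exact hjk⟩,
                hmb.symm⟩
            rw [ht]; linarith
          · have ht : (if i = b ∧ j = a ∧ (k ≠ a ∧ k ≠ b) then (4:ℝ) else 0) = 4 :=
              if_pos ⟨hmb.symm, hma.symm,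
                by rw [hma]; exact Ne.symm hjk, by rw [hmb]; exact Ne.symm hik⟩
            rw [ht]; linarith
          · exact absurd (hma.trans hmb.symm) hab
          · have ht : (if (i ≠ a ∧ i ≠ b) ∧ j = a ∧ k = b then (4:ℝ) else 0) = 4 :=
              if_pos ⟨⟨by rw [hma]; exact hij, by rw [hmb]; exact hik⟩, hma.symm, hmb.symm⟩
            rw [ht]; linarith
          · have ht : (if i = b ∧ (j ≠ a ∧ j ≠ b) ∧ k = a then (4:ℝ) else 0) = 4 :=
              if_pos ⟨hmb.symm, ⟨by rw [hma]; exact hjk, by rw [hmb]; exact Ne.symm hij⟩,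
                hma.symm⟩
            rw [ht]; linarith
          · have ht : (if (i ≠ a ∧ i ≠ b) ∧ j = b ∧ k = a then (4:ℝ) else 0) = 4 :=
              if_pos ⟨⟨by rw [hma]; exact hik, by rw [hmb]; exact hij⟩, hmb.symm, hma.symm⟩
            rw [ht]; linarith
          · exact absurd (hma.trans hmb.symm) hab
        · rw [if_neg (fun hc => hmb hc.2)] at hb
          linarith [abs_nonneg ((Lt i j k * A * Lt i j k) a b)]
      · rw [if_neg (fun hc => hma hc.1)] at hb
        linarith [abs_nonneg ((Lt i j k * A * Lt i j k) a b)]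
    · rw [if_neg hd]
      linarith
  calc ∑ i : Fin n, ∑ j : Fin n, ∑ k : Fin n,
        (if i ≠ j ∧ i ≠ k ∧ j ≠ k then |(Lt i j k * A * Lt i j k) a b| else 0)
      ≤ ∑ i : Fin n, ∑ j : Fin n, ∑ k : Fin n,
        ((if i = a ∧ j = b ∧ (k ≠ a ∧ k ≠ b) then (4:ℝ) else 0)
          + (if i = a ∧ (j ≠ a ∧ j ≠ b) ∧ k = b then (4:ℝ) else 0)
          + (if i = b ∧ j = a ∧ (k ≠ a ∧ k ≠ b) then (4:ℝ) else 0)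
          + (if i = b ∧ (j ≠ a ∧ j ≠ b) ∧ k = a then (4:ℝ) else 0)
          + (if (i ≠ a ∧ i ≠ b) ∧ j = a ∧ k = b then (4:ℝ) else 0)
          + (if (i ≠ a ∧ i ≠ b) ∧ j = b ∧ k = a then (4:ℝ) else 0)) := by
        refine Finset.sum_le_sum (fun i _ => Finset.sum_le_sum (fun j _ =>
          Finset.sum_le_sum (fun k _ => hptwise i j k)))
    _ ≤ 24 * ((n:ℝ) - 2) := by
        simp only [Finset.sum_add_distrib]
        rw [sum3_split3 (fun i => i = a) (fun j => j = b) (fun k => k ≠ a ∧ k ≠ b) 4,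
          sum3_split3 (fun i => i = a) (fun j => j ≠ a ∧ j ≠ b) (fun k => k = b) 4,
          sum3_split3 (fun i => i = b) (fun j => j = a) (fun k => k ≠ a ∧ k ≠ b) 4,
          sum3_split3 (fun i => i = b) (fun j => j ≠ a ∧ j ≠ b) (fun k => k = a) 4,
          sum3_split3 (fun i => i ≠ a ∧ i ≠ b) (fun j => j = a) (fun k => k = b) 4,
          sum3_split3 (fun i => i ≠ a ∧ i ≠ b) (fun j => j = b) (fun k => k = a) 4,
          sum_ite_eq_one a, sum_ite_eq_one b, count_ne_two hab (1:ℝ),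
          count_ne_two hab (4:ℝ), sum_ite_eq_c a (4:ℝ), sum_ite_eq_c b (4:ℝ)]
        have h2 : (0:ℝ) ≤ (n:ℝ) - 2 := by
          have hnt : Nontrivial (Fin n) := ⟨⟨a, b, hab⟩⟩
          have := Fintype.one_lt_card (α := Fin n)
          simp only [Fintype.card_fin] at this
          have : (2:ℝ) ≤ (n:ℝ) := by exact_mod_cast this
          linarith
        nlinarith


/-- With `max_i ‖x_i‖² ≤ 1` and `n ≥ 3`, and `|T| = n·C(n−1,2)`,
`(1/|T|)·‖Σ_{t∈T} M_t²‖ ≤ 70·‖X Xᵀ‖/n` in the spectral norm. -/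
theorem avg_sum_Mt_sq_norm_le {p n : ℕ} (hn : 3 ≤ n) (X : Matrix (Fin p) (Fin n) ℝ)
    (hnorm : ∀ i, (∑ a, (X a i) ^ 2) ≤ 1) :
    (1 / (n * (n - 1).choose 2 : ℝ)) *
      ‖∑ t ∈ Finset.univ.filter
          (fun t : Fin n × Fin n × Fin n => t.1 ≠ t.2.1 ∧ t.1 ≠ t.2.2 ∧ t.2.1 < t.2.2),
        Mt X t.1 t.2.1 t.2.2 * Mt X t.1 t.2.1 t.2.2‖
      ≤ 70 * ‖X * Xᵀ‖ / n := by
    classical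
  set r : ℝ := (n : ℝ) with hr
  have hr3 : (3:ℝ) ≤ r := by rw [hr]; exact_mod_cast hn
  set A : Matrix (Fin n) (Fin n) ℝ := Xᵀ * X with hAdef
  -- entries of A are bounded by 1
  have hA : ∀ c d, |A c d| ≤ 1 := by
    intro c d
    have hval : A c d = ∑ a, X a c * X a d := by
      simp [hAdef, Matrix.mul_apply, Matrix.transpose_apply]
    have hcs : (∑ a, X a c * X a d)^2 ≤ (∑ a, (X a c)^2) * (∑ a, (X a d)^2) :=
      Finset.sum_mul_sq_le_sq_mul_sq Finset.univ _ _
    have h1 : (∑ a, (X a c)^2) * (∑ a, (X a d)^2) ≤ 1 := by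
      have hc1 := hnorm c
      have hd1 := hnorm d
      have hc0 : (0:ℝ) ≤ ∑ a, (X a c)^2 := by positivity
      have hd0 : (0:ℝ) ≤ ∑ a, (X a d)^2 := by positivity
      nlinarith
    rw [hval, ← sq_le_one_iff_abs_le_one]
    exact le_trans hcs h1
  set T := Finset.univ.filter
      (fun t : Fin n × Fin n × Fin n => t.1 ≠ t.2.1 ∧ t.1 ≠ t.2.2 ∧ t.2.1 < t.2.2) with hT
  set D := Finset.univ.filter
      (fun t : Fin n × Fin n × Fin n => t.1 ≠ t.2.1 ∧ t.1 ≠ t.2.2 ∧ t.2.1 ≠ t.2.2) with hD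
  set f : Fin n × Fin n × Fin n → Matrix (Fin n) (Fin n) ℝ :=
    fun t => Lt t.1 t.2.1 t.2.2 * A * Lt t.1 t.2.1 t.2.2 with hf
  set S : Matrix (Fin n) (Fin n) ℝ := ∑ t ∈ T, f t with hS
  -- step 1 : sum of Mt² equals X * S * Xᵀ
  have hsum : (∑ t ∈ T, Mt X t.1 t.2.1 t.2.2 * Mt X t.1 t.2.1 t.2.2) = X * S * Xᵀ := by
    have hterm : ∀ t : Fin n × Fin n × Fin n,
        Mt X t.1 t.2.1 t.2.2 * Mt X t.1 t.2.1 t.2.2 = X * f t * Xᵀ := by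
      intro t
      simp only [Mt, hf, hAdef, Matrix.mul_assoc]
    rw [Finset.sum_congr rfl (fun t _ => hterm t), ← Matrix.sum_mul, ← Matrix.mul_sum]
  -- doubling
  have hdouble : S + S = ∑ t ∈ D, f t := by
    have hp1 : D.filter (fun t => t.2.1 < t.2.2) = T := by
      ext t
      simp only [hD, hT, Finset.mem_filter, Finset.mem_univ, true_and, and_assoc]
      constructor
      · rintro ⟨h1, h2, h3, h4⟩; exact ⟨h1, h2, h4⟩
      · rintro ⟨h1, h2, h3⟩; exact ⟨h1, h2, ne_of_lt h3, h3⟩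
    have hp2 : ∑ t ∈ D.filter (fun t => ¬ t.2.1 < t.2.2), f t = ∑ t ∈ T, f t := by
      refine Finset.sum_nbij' (fun t => (t.1, t.2.2, t.2.1)) (fun t => (t.1, t.2.2, t.2.1))
        ?_ ?_ ?_ ?_ ?_
      · intro t ht
        simp only [hD, Finset.mem_filter, Finset.mem_univ, true_and] at ht
        obtain ⟨⟨h1, h2, h3⟩, h4⟩ := ht
        simp only [hT, Finset.mem_filter, Finset.mem_univ, true_and]
        exact ⟨h2, h1, lt_of_le_of_ne (not_lt.mp h4) (Ne.symm h3)⟩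
      · intro t ht
        simp only [hT, Finset.mem_filter, Finset.mem_univ, true_and] at ht
        obtain ⟨h1, h2, h3⟩ := ht
        simp only [hD, Finset.mem_filter, Finset.mem_univ, true_and]
        exact ⟨⟨h2, h1, (ne_of_lt h3).symm⟩, not_lt.mpr (le_of_lt h3)⟩
      · intro t _; rfl
      · intro t _; rfl
      · intro t _
        show f t = f (t.1, t.2.2, t.2.1)
        simp only [hf]
        rw [Lt_swap t.1 t.2.2 t.2.1]
        simp [Matrix.neg_mul, Matrix.mul_neg]
    calc S + S = ∑ t ∈ D.filter (fun t => t.2.1 < t.2.2), f t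
          + ∑ t ∈ D.filter (fun t => ¬ t.2.1 < t.2.2), f t := by rw [hp1, hp2]
      _ = ∑ t ∈ D, f t := Finset.sum_filter_add_sum_filter_not D _ f
  -- entrywise bounds on S
  have habs : ∀ a b : Fin n, |S a b + S a b| ≤
      ∑ i : Fin n, ∑ j : Fin n, ∑ k : Fin n,
        (if i ≠ j ∧ i ≠ k ∧ j ≠ k then |(Lt i j k * A * Lt i j k) a b| else 0) := by
    intro a b
    have h1 : S a b + S a b = ∑ t ∈ D, f t a b := by
      rw [show S a b + S a b = (S + S) a b from rfl, hdouble]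
      exact Matrix.sum_apply a b D f
    rw [h1]
    calc |∑ t ∈ D, f t a b| ≤ ∑ t ∈ D, |f t a b| := Finset.abs_sum_le_sum_abs _ _
      _ = ∑ t : Fin n × Fin n × Fin n,
          (if t.1 ≠ t.2.1 ∧ t.1 ≠ t.2.2 ∧ t.2.1 ≠ t.2.2 then |f t a b| else 0) := by
          rw [hD, Finset.sum_filter]
      _ = ∑ i : Fin n, ∑ j : Fin n, ∑ k : Fin n,
          (if i ≠ j ∧ i ≠ k ∧ j ≠ k then |(Lt i j k * A * Lt i j k) a b| else 0) := by
          rw [Fintype.sum_prod_type]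
          refine Finset.sum_congr rfl (fun i _ => ?_)
          rw [Fintype.sum_prod_type]
  have hSdiag : ∀ a : Fin n, |S a a| ≤ 6 * (r - 1) * (r - 2) := by
    intro a
    have h1 := le_trans (habs a a) (sumD_diag A hA a)
    have h2 : |S a a + S a a| = 2 * |S a a| := by
      rw [← two_mul, abs_mul]
      norm_num
    rw [h2] at h1
    linarith
  have hSoff : ∀ a b : Fin n, a ≠ b → |S a b| ≤ 12 * (r - 2) := by
    intro a b hab
    have h1 := le_trans (habs a b) (sumD_off A hA hab)
    have h2 : |S a b + S a b| = 2 * |S a b| := by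
      rw [← two_mul, abs_mul]
      norm_num
    rw [h2] at h1
    linarith
  -- operator norm of S
  have hSnorm : ‖S‖ ≤ 35 * (r - 1) * (r - 2) := by
    set dg : Fin n → ℝ := fun a => S a a with hdg
    set E : Matrix (Fin n) (Fin n) ℝ := S - Matrix.diagonal dg with hE
    have hsplit : S = Matrix.diagonal dg + E := by
      rw [hE]; abel
    have hd : ‖Matrix.diagonal dg‖ ≤ 6 * (r - 1) * (r - 2) :=
      opNorm_diagonal_le dg (by nlinarith) (fun a => hSdiag a)
    have hEetry : ∀ a b, |E a b| ≤ 12 * (r - 2) := by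
      intro a b
      by_cases hab : a = b
      · subst hab
        have : E a a = 0 := by
          simp [hE, Matrix.sub_apply, Matrix.diagonal_apply_eq, hdg]
        rw [this]
        rw [abs_zero]
        nlinarith
      · have : E a b = S a b := by
          simp [hE, Matrix.sub_apply, Matrix.diagonal_apply_ne _ hab]
        rw [this]
        exact hSoff a b hab
    have hEn : ‖E‖ ≤ n * (12 * (r - 2)) :=
      opNorm_le_card_mul E (by nlinarith) hEetry
    calc ‖S‖ = ‖Matrix.diagonal dg + E‖ := by rw [← hsplit]
      _ ≤ ‖Matrix.diagonal dg‖ + ‖E‖ := norm_add_le _ _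
      _ ≤ 6 * (r - 1) * (r - 2) + r * (12 * (r - 2)) := by
          have hEn' : ‖E‖ ≤ r * (12 * (r - 2)) := hEn
          linarith
      _ ≤ 35 * (r - 1) * (r - 2) := by nlinarith
  -- norm of the product
  have hXt : Xᴴ = Xᵀ := Matrix.conjTranspose_eq_transpose_of_trivial X
  have hXtn : ‖Xᵀ‖ = ‖X‖ := by rw [← hXt]; exact Matrix.l2_opNorm_conjTranspose X
  have hXXT : ‖X * Xᵀ‖ = ‖X‖ * ‖X‖ := by
    have h1 : (Xᵀ)ᴴ = X := by
      rw [Matrix.conjTranspose_eq_transpose_of_trivial, Matrix.transpose_transpose]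
    have h2 := Matrix.l2_opNorm_conjTranspose_mul_self Xᵀ
    rw [h1, hXtn] at h2
    exact h2
  have hprod : ‖X * S * Xᵀ‖ ≤ ‖S‖ * ‖X * Xᵀ‖ := by
    calc ‖X * S * Xᵀ‖ ≤ ‖X * S‖ * ‖Xᵀ‖ := Matrix.l2_opNorm_mul _ _
      _ ≤ ‖X‖ * ‖S‖ * ‖Xᵀ‖ :=
          mul_le_mul_of_nonneg_right (Matrix.l2_opNorm_mul _ _) (norm_nonneg _)
      _ = ‖S‖ * (‖X‖ * ‖X‖) := by rw [hXtn]; ring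
      _ = ‖S‖ * ‖X * Xᵀ‖ := by rw [hXXT]
  -- final arithmetic
  have hfin : ‖∑ t ∈ T, Mt X t.1 t.2.1 t.2.2 * Mt X t.1 t.2.1 t.2.2‖
      ≤ 35 * (r - 1) * (r - 2) * ‖X * Xᵀ‖ := by
    rw [hsum]
    calc ‖X * S * Xᵀ‖ ≤ ‖S‖ * ‖X * Xᵀ‖ := hprod
      _ ≤ 35 * (r - 1) * (r - 2) * ‖X * Xᵀ‖ :=
          mul_le_mul_of_nonneg_right hSnorm (norm_nonneg _)
  have hch : (((n - 1).choose 2 : ℕ) : ℝ) = (r - 1) * (r - 2) / 2 := by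
    have h1 : (n - 1).choose 2 = (n - 1) * (n - 2) / 2 := by
      rw [Nat.choose_two_right]
      have h0 : n - 1 - 1 = n - 2 := by omega
      rw [h0]
    have h2 : 2 ∣ (n - 1) * (n - 2) := by
      have := Nat.even_mul_succ_self (n - 2)
      have h3 : n - 2 + 1 = n - 1 := by omega
      rw [h3] at this
      exact (even_iff_two_dvd.mp (by rwa [mul_comm] at this))
    have h4 : ((n - 1).choose 2 : ℕ) * 2 = (n - 1) * (n - 2) := by
      rw [h1, Nat.div_mul_cancel h2]
    have h7 : ((n-1 : ℕ) : ℝ) = r - 1 := by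
      rw [Nat.cast_sub (by omega : 1 ≤ n)]; norm_num [hr]
    have h8 : ((n-2 : ℕ) : ℝ) = r - 2 := by
      rw [Nat.cast_sub (by omega : 2 ≤ n)]; norm_num [hr]
    have h6 : (((n-1).choose 2 : ℕ) : ℝ) * 2 = ((n-1 : ℕ) : ℝ) * ((n-2 : ℕ) : ℝ) := by
      exact_mod_cast congrArg (Nat.cast : ℕ → ℝ) h4
    rw [h7, h8] at h6
    linarith
  have hq : ((n : ℝ) * ((n-1).choose 2 : ℕ)) = r * (r - 1) * (r - 2) / 2 := by
    rw [hch]; ring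
  have hqpos : (0:ℝ) < r * (r - 1) * (r - 2) / 2 := by nlinarith
  have hNn : (0:ℝ) ≤ ‖X * Xᵀ‖ := norm_nonneg _
  rw [hq]
  calc (1 / (r * (r - 1) * (r - 2) / 2)) * ‖∑ t ∈ T, Mt X t.1 t.2.1 t.2.2 * Mt X t.1 t.2.1 t.2.2‖
      ≤ (1 / (r * (r - 1) * (r - 2) / 2)) * (35 * (r - 1) * (r - 2) * ‖X * Xᵀ‖) := by
        apply mul_le_mul_of_nonneg_left hfin
        positivity
    _ = 70 * ‖X * Xᵀ‖ / r := by
        have hne1 : r ≠ 0 := by linarith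
        have hne2 : r - 1 ≠ 0 := by linarith
        have hne3 : r - 2 ≠ 0 := by linarith
        field_simp
        ring
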